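/- arXiv:1406.0747 — 2 statements merged into one kernel-verified Lean document; each statement's English description precedes it below -/
import Mathlib

section
/- Let (X, μ) be a measure space, 2 ≤ p < ∞, and suppose nonnegative measurable functions g, u, h, d satisfy ∫ g^p dμ ≤ (p-2) ∫ u·h·g^{p-2} dμ + ∫ u·d·g^{p-2} dμ with all integrals finite. Then there exist constants C_p, D_p > 0 depending only on p such that for every ε > 0, ∫ g^p dμ ≤ ε^{-2} C_p ∫ u^p dμ + ε² D_p (∫ h^p dμ + ∫ d^p dμ). -/
open MeasureTheory


lemma ptwise_young (p s r : ℝ) (hp : 2 ≤ p) (hs : 0 < s) (hr : 0 < r)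
    (u h g : ℝ) (hu : 0 ≤ u) (hh : 0 ≤ h) (hg : 0 ≤ g) :
    u * h * g ^ (p - 2) ≤
      2 / p * s ^ (1 - p / 2) * (1 / (2 * r) * u ^ p + r / 2 * h ^ p)
        + s * ((p - 2) / p) * g ^ p := by
  have hp0 : (0:ℝ) < p := by linarith
  have huh : (0:ℝ) ≤ u * h := mul_nonneg hu hh
  have huhs : (0:ℝ) ≤ u * h / s := div_nonneg huh hs.le
  have hgm := Real.geom_mean_le_arith_mean2_weighted
    (by positivity : (0:ℝ) ≤ 2 / p) (show (0:ℝ) ≤ (p-2)/p from div_nonneg (by linarith) hp0.le)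
    (by positivity : (0:ℝ) ≤ (u*h/s) ^ (p/2)) (by positivity : (0:ℝ) ≤ g ^ p)
    (show 2/p + (p-2)/p = 1 by field_simp; ring)
  have e1 : ((u*h/s) ^ (p/2)) ^ (2/p) = u*h/s := by
    rw [← Real.rpow_mul huhs]
    rw [show p/2*(2/p) = 1 by field_simp]
    exact Real.rpow_one _
  have e2 : (g ^ p) ^ ((p-2)/p) = g ^ (p-2) := by
    rw [← Real.rpow_mul hg]
    congr 1; field_simp
  rw [e1, e2] at hgm
  -- expand (u*h/s)^(p/2)
  have hx : (u*h/s) ^ (p/2) = u ^ (p/2) * h ^ (p/2) / s ^ (p/2) := by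
    rw [Real.div_rpow huh hs.le, Real.mul_rpow hu hh]
  -- AM-GM for the product
  have hup : u ^ (p/2) * u ^ (p/2) = u ^ p := by
    rw [← Real.rpow_add' hu (by positivity)]; norm_num
  have hhp : h ^ (p/2) * h ^ (p/2) = h ^ p := by
    rw [← Real.rpow_add' hh (by positivity)]; norm_num
  have hamgm : u ^ (p/2) * h ^ (p/2) ≤ 1 / (2*r) * u ^ p + r / 2 * h ^ p := by
    rw [← hup, ← hhp]
    set a := u ^ (p/2)
    set b := h ^ (p/2)
    have key : 2*r*(a*b) ≤ a*a + r*r*(b*b) := by nlinarith [sq_nonneg (a - r*b)]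
    have h2r : (0:ℝ) < 2*r := by linarith
    calc a*b = (2*r*(a*b))/(2*r) := by field_simp
      _ ≤ (a*a + r*r*(b*b))/(2*r) := by gcongr
      _ = 1/(2*r)*(a*a) + r/2*(b*b) := by field_simp
  have hsp : (0:ℝ) < s ^ (p/2) := Real.rpow_pos_of_pos hs _
  have hs1 : s ^ (1 - p/2) = s / s ^ (p/2) := by
    rw [Real.rpow_sub hs, Real.rpow_one]
  calc u * h * g ^ (p-2) = s * (u*h/s * g ^ (p-2)) := by field_simp
    _ ≤ s * (2/p * ((u*h/s) ^ (p/2)) + (p-2)/p * g ^ p) :=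
        mul_le_mul_of_nonneg_left hgm hs.le
    _ = 2/p * s ^ (1 - p/2) * (u ^ (p/2) * h ^ (p/2)) + s * ((p-2)/p) * g ^ p := by
        rw [hx, hs1]; field_simp
    _ ≤ 2 / p * s ^ (1 - p / 2) * (1 / (2 * r) * u ^ p + r / 2 * h ^ p)
        + s * ((p - 2) / p) * g ^ p := by
        have : (0:ℝ) ≤ 2/p * s ^ (1-p/2) := by positivity
        have := mul_le_mul_of_nonneg_left hamgm this
        linarith

lemma int_bound {X : Type} [MeasurableSpace X] (μ : Measure X) (U H G f : X → ℝ)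
    (c a b e : ℝ)
    (hU : Integrable U μ) (hH : Integrable H μ) (hG : Integrable G μ)
    (hf : Integrable f μ)
    (hpt : ∀ x, f x ≤ c * (a * U x + b * H x) + e * G x) :
    ∫ x, f x ∂μ ≤ c * (a * ∫ x, U x ∂μ + b * ∫ x, H x ∂μ) + e * ∫ x, G x ∂μ := by
  have iU : Integrable (fun x => a * U x) μ := hU.const_mul a
  have iH : Integrable (fun x => b * H x) μ := hH.const_mul b
  have iUH : Integrable (fun x => a * U x + b * H x) μ := by exact iU.add iH
  have i1 : Integrable (fun x => c * (a * U x + b * H x)) μ := iUH.const_mul c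
  have i2 : Integrable (fun x => e * G x) μ := hG.const_mul e
  have hint : Integrable (fun x => c * (a * U x + b * H x) + e * G x) μ := by exact i1.add i2
  calc ∫ x, f x ∂μ ≤ ∫ x, (c * (a * U x + b * H x) + e * G x) ∂μ :=
        integral_mono hf hint hpt
    _ = c * (a * ∫ x, U x ∂μ + b * ∫ x, H x ∂μ) + e * ∫ x, G x ∂μ := by
        rw [integral_add i1 i2, integral_const_mul, integral_add iU iH,
          integral_const_mul, integral_const_mul, integral_const_mul]

lemma arith_step (pp c e a b G U H D : ℝ) (hp : 2 ≤ pp) (hc : 0 ≤ c)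
    (ha : 0 ≤ a) (hb : 0 ≤ b) (hG : 0 ≤ G) (hU : 0 ≤ U) (hH : 0 ≤ H) (hD : 0 ≤ D)
    (habs : (pp - 1) * e ≤ 1 / 2)
    (h1 : G ≤ (pp - 2) * (c * (a * U + b * H) + e * G) + (c * (a * U + b * D) + e * G)) :
    G ≤ 2 * a * (c * (pp - 1)) * U + 2 * b * (c * (pp - 1)) * (H + D) := by
  have k1 : (pp - 1) * e * G ≤ 1 / 2 * G := mul_le_mul_of_nonneg_right habs hG
  have k2 : (pp - 2) * H + D ≤ (pp - 1) * (H + D) := by nlinarith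
  have k3 : c * b * ((pp - 2) * H + D) ≤ c * b * ((pp - 1) * (H + D)) :=
    mul_le_mul_of_nonneg_left k2 (mul_nonneg hc hb)
  have k4 : 0 ≤ c * a * U := by positivity
  nlinarith [k1, k3, k4]


/-- Abstract key step of the `Lᵖ`-interpolation inequality: if `2 ≤ p < ∞` then there
are constants `C_p, D_p > 0` depending only on `p` such that, whenever nonnegative
measurable functions `g, u, h, d` on a measure space `(X, μ)` with finite `p`-integrals
satisfy `∫ g^p ≤ (p-2) ∫ u·h·g^{p-2} + ∫ u·d·g^{p-2}` (all integrals finite), one has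
`∫ g^p ≤ ε⁻² C_p ∫ u^p + ε² D_p (∫ h^p + ∫ d^p)` for every `ε > 0`. -/
theorem abstract_interpolation_step (p : ℝ) (hp : 2 ≤ p) :
    ∃ Cp Dp : ℝ, 0 < Cp ∧ 0 < Dp ∧
      ∀ {X : Type} [MeasurableSpace X] (μ : Measure X) (g u h d : X → ℝ),
        Measurable g → Measurable u → Measurable h → Measurable d →
        (∀ x, 0 ≤ g x) → (∀ x, 0 ≤ u x) → (∀ x, 0 ≤ h x) → (∀ x, 0 ≤ d x) →
        Integrable (fun x => g x ^ p) μ →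
        Integrable (fun x => u x ^ p) μ →
        Integrable (fun x => h x ^ p) μ →
        Integrable (fun x => d x ^ p) μ →
        Integrable (fun x => u x * h x * g x ^ (p - 2)) μ →
        Integrable (fun x => u x * d x * g x ^ (p - 2)) μ →
        (∫ x, g x ^ p ∂μ) ≤
            (p - 2) * ∫ x, u x * h x * g x ^ (p - 2) ∂μ +
              ∫ x, u x * d x * g x ^ (p - 2) ∂μ →
        ∀ ε : ℝ, 0 < ε →
          (∫ x, g x ^ p ∂μ) ≤
            ε⁻¹ ^ 2 * Cp * ∫ x, u x ^ p ∂μ +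
              ε ^ 2 * Dp * ((∫ x, h x ^ p ∂μ) + ∫ x, d x ^ p ∂μ) := by
  have hp0 : (0:ℝ) < p := by linarith
  set s : ℝ := (p * p)⁻¹ with hs_def
  have hs : 0 < s := by positivity
  set c : ℝ := 2 / p * s ^ (1 - p / 2) with hc_def
  have hc : 0 < c := by
    have := Real.rpow_pos_of_pos hs (1 - p / 2)
    positivity
  have hK : 0 < c * (p - 1) := by
    have : (0:ℝ) < p - 1 := by linarith
    positivity
  refine ⟨c * (p - 1), c * (p - 1), hK, hK, ?_⟩
  intro X _ μ g u h d mg mu mh md hg0 hu0 hh0 hd0 ig iu ih id' iuh iud hmain ε hε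
  set r : ℝ := ε ^ 2 with hr_def
  have hr : 0 < r := by positivity
  have hU0 : 0 ≤ ∫ x, u x ^ p ∂μ := integral_nonneg fun x => Real.rpow_nonneg (hu0 x) p
  have hH0 : 0 ≤ ∫ x, h x ^ p ∂μ := integral_nonneg fun x => Real.rpow_nonneg (hh0 x) p
  have hD0 : 0 ≤ ∫ x, d x ^ p ∂μ := integral_nonneg fun x => Real.rpow_nonneg (hd0 x) p
  have hG0 : 0 ≤ ∫ x, g x ^ p ∂μ := integral_nonneg fun x => Real.rpow_nonneg (hg0 x) p
  have Hh : ∫ x, u x * h x * g x ^ (p - 2) ∂μ ≤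
      c * (1 / (2 * r) * ∫ x, u x ^ p ∂μ + r / 2 * ∫ x, h x ^ p ∂μ)
        + s * ((p - 2) / p) * ∫ x, g x ^ p ∂μ :=
    int_bound μ _ _ _ _ c (1 / (2 * r)) (r / 2) (s * ((p - 2) / p)) iu ih ig iuh
      (fun x => ptwise_young p s r hp hs hr (u x) (h x) (g x) (hu0 x) (hh0 x) (hg0 x))
  have Hd : ∫ x, u x * d x * g x ^ (p - 2) ∂μ ≤
      c * (1 / (2 * r) * ∫ x, u x ^ p ∂μ + r / 2 * ∫ x, d x ^ p ∂μ)
        + s * ((p - 2) / p) * ∫ x, g x ^ p ∂μ :=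
    int_bound μ _ _ _ _ c (1 / (2 * r)) (r / 2) (s * ((p - 2) / p)) iu id' ig iud
      (fun x => ptwise_young p s r hp hs hr (u x) (d x) (g x) (hu0 x) (hd0 x) (hg0 x))
  have habs : (p - 1) * (s * ((p - 2) / p)) ≤ 1 / 2 := by
    rw [show (p - 1) * (s * ((p - 2) / p)) = (p - 1) * (p - 2) / (p * p * p) by
      rw [hs_def]; field_simp]
    rw [div_le_iff₀ (by positivity)]
    nlinarith
  have h1 : (∫ x, g x ^ p ∂μ) ≤
      (p - 2) * (c * (1 / (2 * r) * ∫ x, u x ^ p ∂μ + r / 2 * ∫ x, h x ^ p ∂μ)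
          + s * ((p - 2) / p) * ∫ x, g x ^ p ∂μ)
        + (c * (1 / (2 * r) * ∫ x, u x ^ p ∂μ + r / 2 * ∫ x, d x ^ p ∂μ)
          + s * ((p - 2) / p) * ∫ x, g x ^ p ∂μ) := by
    have := mul_le_mul_of_nonneg_left Hh (by linarith : (0:ℝ) ≤ p - 2)
    linarith
  have final := arith_step p c (s * ((p - 2) / p)) (1 / (2 * r)) (r / 2)
    (∫ x, g x ^ p ∂μ) (∫ x, u x ^ p ∂μ) (∫ x, h x ^ p ∂μ) (∫ x, d x ^ p ∂μ)
    hp hc.le (by positivity) (by positivity) hG0 hU0 hH0 hD0 habs h1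
  have e1 : ε⁻¹ ^ 2 = 2 * (1 / (2 * r)) := by
    rw [inv_pow, hr_def]; field_simp
  have e2 : ε ^ 2 = 2 * (r / 2) := by rw [hr_def]; ring
  calc (∫ x, g x ^ p ∂μ)
      ≤ 2 * (1 / (2 * r)) * (c * (p - 1)) * ∫ x, u x ^ p ∂μ
          + 2 * (r / 2) * (c * (p - 1)) * ((∫ x, h x ^ p ∂μ) + ∫ x, d x ^ p ∂μ) := final
    _ = ε⁻¹ ^ 2 * (c * (p - 1)) * ∫ x, u x ^ p ∂μ
          + ε ^ 2 * (c * (p - 1)) * ((∫ x, h x ^ p ∂μ) + ∫ x, d x ^ p ∂μ) := by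
        rw [e1, e2]
end

section
/- Let X = N × ℝ where N is a metric measure space with finite total measure μ_N(N) and ℝ carries Lebesgue measure, with product measure μ and ℓ²-product metric. If there are constants A₁ > 0 and a radius r₀ > 0 such that μ_N(B^N_r(p)) ≥ A₁ r^{m-1} for all p ∈ N and 0 < r ≤ r₀, and μ_N(B^N_r(p)) ≤ B₂ r^{m-1} for all p and 0 < r ≤ r₀, then there exists C > 0 such that μ(B^X_{tR}(x)) ≤ C t^m μ(B^X_R(x)) for all x ∈ X, R > 0 and t ≥ 1. -/
open Set Metric MeasureTheory
open scoped ENNReal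

set_option maxHeartbeats 1600000 in
/-- Doubling estimate on a product `X = N × ℝ`: if `N` is a metric measure space of
finite total measure with two-sided Ahlfors-type bounds
`A₁ r^{m-1} ≤ μ_N(B^N_r(p)) ≤ B₂ r^{m-1}` at small scales `0 < r ≤ r₀`, then the
product measure `μ = μ_N ⊗ Leb` and the ℓ²-product metric on `X` satisfy
`μ(B^X_{tR}(x)) ≤ C t^m μ(B^X_R(x))` for all `x`, `R > 0`, `t ≥ 1`. -/
theorem product_doubling {N : Type*} [MetricSpace N] [MeasurableSpace N]
    [BorelSpace N] (μN : Measure N) [IsFiniteMeasure μN]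
    (m : ℕ) (hm : 1 ≤ m) (A₁ B₂ r₀ : ℝ) (hA₁ : 0 < A₁) (hB₂ : 0 < B₂) (hr₀ : 0 < r₀)
    (hlow : ∀ (p : N) (r : ℝ), 0 < r → r ≤ r₀ →
      ENNReal.ofReal (A₁ * r ^ (m - 1)) ≤ μN (ball p r))
    (hup : ∀ (p : N) (r : ℝ), 0 < r → r ≤ r₀ →
      μN (ball p r) ≤ ENNReal.ofReal (B₂ * r ^ (m - 1))) :
    ∃ C : ℝ, 0 < C ∧
      ∀ (x : N × ℝ) (R t : ℝ), 0 < R → 1 ≤ t →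
        (μN.prod volume)
            {y : N × ℝ | Real.sqrt (dist x.1 y.1 ^ 2 + |x.2 - y.2| ^ 2) < t * R} ≤
          ENNReal.ofReal (C * t ^ m) *
            (μN.prod volume)
              {y : N × ℝ | Real.sqrt (dist x.1 y.1 ^ 2 + |x.2 - y.2| ^ 2) < R} := by
  obtain ⟨n, rfl⟩ : ∃ n, m = n + 1 := ⟨m - 1, (Nat.succ_pred_eq_of_pos hm).symm⟩
  simp only [Nat.add_sub_cancel] at hlow hup ⊢
  set K : ℝ := B₂ + (μN Set.univ).toReal / r₀ ^ n with hK
  have hμtop : (μN Set.univ).toReal ≥ 0 := ENNReal.toReal_nonneg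
  have hKpos : 0 < K := by positivity
  refine ⟨K * 2 ^ (n + 1) / A₁, by positivity, fun x R t hR ht => ?_⟩
  have ht0 : 0 < t := lt_of_lt_of_le one_pos ht
  set s2 : ℝ := Real.sqrt 2 with hs2def
  have hs2sq : s2 ^ 2 = 2 := Real.sq_sqrt (by norm_num)
  have hs2pos : 0 < s2 := Real.sqrt_pos.mpr (by norm_num)
  have hs2le2 : s2 ≤ 2 := by nlinarith
  have hs2ge1 : 1 ≤ s2 := by nlinarith
  set c : ℝ := min (R / s2) r₀ with hc
  have hcpos : 0 < c := lt_min (by positivity) hr₀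
  clear_value s2 c
  -- global upper bound for balls in N
  have hupK : ∀ (p : N) (s : ℝ), 0 < s →
      μN (ball p s) ≤ ENNReal.ofReal (K * (min s r₀) ^ n) := by
    intro p s hs
    rcases le_total s r₀ with h | h
    · rw [min_eq_left h]
      refine (hup p s hs h).trans (ENNReal.ofReal_le_ofReal ?_)
      have hsn : 0 ≤ s ^ n := pow_nonneg hs.le n
      have hBK : B₂ ≤ K := le_add_of_nonneg_right (by positivity)
      nlinarith
    · rw [min_eq_right h]
      calc μN (ball p s) ≤ μN Set.univ := measure_mono (subset_univ _)
        _ = ENNReal.ofReal ((μN Set.univ).toReal) := by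
            rw [ENNReal.ofReal_toReal (measure_ne_top μN _)]
        _ ≤ ENNReal.ofReal (K * r₀ ^ n) := by
            apply ENNReal.ofReal_le_ofReal
            have hr₀n : 0 < r₀ ^ n := pow_pos hr₀ n
            have : K * r₀ ^ n = B₂ * r₀ ^ n + (μN Set.univ).toReal := by
              rw [hK, add_mul, div_mul_cancel₀ _ (ne_of_gt (pow_pos hr₀ n))]
            nlinarith
  clear_value K
  -- upper inclusion
  have hsub1 : {y : N × ℝ | Real.sqrt (dist x.1 y.1 ^ 2 + |x.2 - y.2| ^ 2) < t * R}
      ⊆ ball x.1 (t * R) ×ˢ ball x.2 (t * R) := by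
    rintro ⟨y1, y2⟩ hy
    simp only [mem_setOf_eq] at hy
    have h1 : dist x.1 y1 ≤ Real.sqrt (dist x.1 y1 ^ 2 + |x.2 - y2| ^ 2) :=
      (Real.le_sqrt dist_nonneg (by positivity)).mpr (by nlinarith [sq_nonneg (|x.2 - y2|)])
    have h2 : |x.2 - y2| ≤ Real.sqrt (dist x.1 y1 ^ 2 + |x.2 - y2| ^ 2) :=
      (Real.le_sqrt (abs_nonneg _) (by positivity)).mpr (by nlinarith [sq_nonneg (dist x.1 y1)])
    constructor
    · exact mem_ball.mpr (by rw [dist_comm]; exact lt_of_le_of_lt h1 hy)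
    · exact mem_ball.mpr (by rw [Real.dist_eq, abs_sub_comm]; exact lt_of_le_of_lt h2 hy)
  -- lower inclusion
  have hsub2 : ball x.1 c ×ˢ ball x.2 (R / s2)
      ⊆ {y : N × ℝ | Real.sqrt (dist x.1 y.1 ^ 2 + |x.2 - y.2| ^ 2) < R} := by
    rintro ⟨y1, y2⟩ ⟨h1, h2⟩
    simp only [mem_ball] at h1 h2
    rw [dist_comm] at h1
    rw [Real.dist_eq] at h2
    simp only [mem_setOf_eq]
    have e1 : dist x.1 y1 < R / s2 := lt_of_lt_of_le h1 (hc.le.trans (min_le_left _ _))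
    have e2 : |x.2 - y2| < R / s2 := by rw [abs_sub_comm]; exact h2
    have hsq : (R / s2) ^ 2 = R ^ 2 / 2 := by
      rw [div_pow, hs2sq]
    have : dist x.1 y1 ^ 2 + |x.2 - y2| ^ 2 < R ^ 2 := by
      nlinarith [dist_nonneg (x := x.1) (y := y1), abs_nonneg (x.2 - y2)]
    calc Real.sqrt (dist x.1 y1 ^ 2 + |x.2 - y2| ^ 2) < Real.sqrt (R ^ 2) := by
          apply (Real.sqrt_lt_sqrt (by positivity) this)
      _ = R := Real.sqrt_sq hR.le
  -- measure bounds
  have hupper : (μN.prod volume)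
      {y : N × ℝ | Real.sqrt (dist x.1 y.1 ^ 2 + |x.2 - y.2| ^ 2) < t * R} ≤
      ENNReal.ofReal ((K * (min (t * R) r₀) ^ n) * (2 * (t * R))) := by
    calc (μN.prod volume) _ ≤ (μN.prod volume) (ball x.1 (t * R) ×ˢ ball x.2 (t * R)) :=
          measure_mono hsub1
      _ = μN (ball x.1 (t * R)) * volume (ball x.2 (t * R)) := Measure.prod_prod _ _
      _ ≤ ENNReal.ofReal (K * (min (t * R) r₀) ^ n) * ENNReal.ofReal (2 * (t * R)) := by
          rw [Real.volume_ball]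
          exact mul_le_mul' (hupK x.1 (t * R) (by positivity)) le_rfl
      _ = ENNReal.ofReal ((K * (min (t * R) r₀) ^ n) * (2 * (t * R))) := by
          rw [← ENNReal.ofReal_mul (by positivity)]
  have hlower : ENNReal.ofReal ((A₁ * c ^ n) * (2 * (R / s2))) ≤
      (μN.prod volume)
        {y : N × ℝ | Real.sqrt (dist x.1 y.1 ^ 2 + |x.2 - y.2| ^ 2) < R} := by
    calc ENNReal.ofReal ((A₁ * c ^ n) * (2 * (R / s2)))
        = ENNReal.ofReal (A₁ * c ^ n) * ENNReal.ofReal (2 * (R / s2)) :=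
          ENNReal.ofReal_mul (by positivity)
      _ ≤ μN (ball x.1 c) * volume (ball x.2 (R / s2)) := by
          rw [Real.volume_ball]
          exact mul_le_mul' (hlow x.1 c hcpos (hc.le.trans (min_le_right _ _))) le_rfl
      _ = (μN.prod volume) (ball x.1 c ×ˢ ball x.2 (R / s2)) := (Measure.prod_prod _ _).symm
      _ ≤ _ := measure_mono hsub2
  -- the real-number inequality
  have hmin : min (t * R) r₀ ≤ s2 * t * c := by
    have : s2 * t * c = min (s2 * t * (R / s2)) (s2 * t * r₀) := by
      rw [hc, mul_min_of_nonneg _ _ (by positivity : (0:ℝ) ≤ s2 * t)]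
    rw [this]
    apply min_le_min
    · rw [mul_comm s2 t, mul_assoc, mul_div_cancel₀ _ (ne_of_gt hs2pos)]
    · nlinarith [mul_nonneg (by nlinarith : (0:ℝ) ≤ s2 * t - 1) hr₀.le]
  have hminn : (min (t * R) r₀) ^ n ≤ (s2 * t) ^ n * c ^ n := by
    rw [← mul_pow]
    exact pow_le_pow_left₀ (le_min (by positivity) hr₀.le) hmin n
  have hkey : (K * (min (t * R) r₀) ^ n) * (2 * (t * R)) ≤
      (K * 2 ^ (n + 1) / A₁ * t ^ (n + 1)) * ((A₁ * c ^ n) * (2 * (R / s2))) := by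
    have hrhs : (K * 2 ^ (n + 1) / A₁ * t ^ (n + 1)) * ((A₁ * c ^ n) * (2 * (R / s2)))
        = (2 ^ (n + 1) / s2) * (K * t ^ (n + 1) * c ^ n * 2 * R) := by
      field_simp
    rw [hrhs]
    have hlhs : (K * (min (t * R) r₀) ^ n) * (2 * (t * R)) ≤
        s2 ^ n * (K * t ^ (n + 1) * c ^ n * 2 * R) := by
      calc (K * (min (t * R) r₀) ^ n) * (2 * (t * R))
          ≤ (K * ((s2 * t) ^ n * c ^ n)) * (2 * (t * R)) := by
            apply mul_le_mul_of_nonneg_right _ (by positivity)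
            exact mul_le_mul_of_nonneg_left hminn hKpos.le
        _ = s2 ^ n * (K * t ^ (n + 1) * c ^ n * 2 * R) := by
            rw [mul_pow, pow_succ]
            ring
    refine hlhs.trans (mul_le_mul_of_nonneg_right ?_ (by positivity))
    rw [le_div_iff₀ hs2pos, ← pow_succ]
    exact pow_le_pow_left₀ hs2pos.le hs2le2 (n + 1)
  calc (μN.prod volume) _ ≤ ENNReal.ofReal ((K * (min (t * R) r₀) ^ n) * (2 * (t * R))) :=
        hupper
    _ ≤ ENNReal.ofReal ((K * 2 ^ (n + 1) / A₁ * t ^ (n + 1)) * ((A₁ * c ^ n) * (2 * (R / s2)))) :=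
        ENNReal.ofReal_le_ofReal hkey
    _ = ENNReal.ofReal (K * 2 ^ (n + 1) / A₁ * t ^ (n + 1)) *
        ENNReal.ofReal ((A₁ * c ^ n) * (2 * (R / s2))) := ENNReal.ofReal_mul (by positivity)
    _ ≤ _ := mul_le_mul' le_rfl hlower
end
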